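/- (Initial upper bound for the parallel-dock problem F2(P)|CD|Cmax.) Every parallel-dock cross-docking instance admits a feasible schedule (σ1, σ2) whose makespan satisfies Cmax(σ1, σ2) ≤ (∑_{i∈J1} p1 i)/m1 − (max_{i∈J1} p1 i)/m1 + max_{i∈J1} p1 i + (∑_{j∈J2} p2 j)/m2 − (max_{j∈J2} p2 j)/m2 + max_{j∈J2} p2 j, where the right-hand side is evaluated in ℚ. -/

import Mathlib

open Finset

noncomputable def minIdx {m : ℕ} (hm : 0 < m) (L : Fin m → ℕ) : Fin m :=
  (Finset.exists_min_image Finset.univ L ⟨⟨0, hm⟩, Finset.mem_univ _⟩).choose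

lemma minIdx_le {m : ℕ} (hm : 0 < m) (L : Fin m → ℕ) (i : Fin m) :
    L (minIdx hm L) ≤ L i :=
  (Finset.exists_min_image Finset.univ L ⟨⟨0, hm⟩, Finset.mem_univ _⟩).choose_spec.2 i
    (Finset.mem_univ i)

noncomputable def loads {m : ℕ} (hm : 0 < m) (q : ℕ → ℕ) : ℕ → Fin m → ℕ
  | 0 => fun _ => 0
  | (k+1) =>
      Function.update (loads hm q k) (minIdx hm (loads hm q k))
        (loads hm q k (minIdx hm (loads hm q k)) + q k)

lemma loads_sum {m : ℕ} (hm : 0 < m) (q : ℕ → ℕ) (k : ℕ) :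
    ∑ i, loads hm q k i = ∑ a ∈ Finset.range k, q a := by
  induction k with
  | zero => simp [loads]
  | succ k ih =>
    rw [Finset.sum_range_succ, ← ih]
    show ∑ i, Function.update (loads hm q k) _ _ i = _
    rw [Finset.sum_update_of_mem (Finset.mem_univ _)]
    rw [← Finset.add_sum_erase _ _ (Finset.mem_univ (minIdx hm (loads hm q k))), Finset.erase_eq]
    omega

lemma loads_le_succ {m : ℕ} (hm : 0 < m) (q : ℕ → ℕ) (k : ℕ) (i : Fin m) :
    loads hm q k i ≤ loads hm q (k+1) i := by
  show _ ≤ Function.update (loads hm q k) _ _ i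
  rcases eq_or_ne i (minIdx hm (loads hm q k)) with rfl | hne
  · rw [Function.update_self]; omega
  · rw [Function.update_of_ne hne]

lemma loads_mono {m : ℕ} (hm : 0 < m) (q : ℕ → ℕ) {k k' : ℕ} (h : k ≤ k') (i : Fin m) :
    loads hm q k i ≤ loads hm q k' i := by
  induction h with
  | refl => exact le_rfl
  | step _ ih => exact le_trans ih (loads_le_succ hm q _ i)

lemma loads_succ_min {m : ℕ} (hm : 0 < m) (q : ℕ → ℕ) (k : ℕ) :
    loads hm q (k+1) (minIdx hm (loads hm q k))
      = loads hm q k (minIdx hm (loads hm q k)) + q k := by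
  show Function.update (loads hm q k) _ _ _ = _
  rw [Function.update_self]

lemma greedy_schedule {J : Type*} [Fintype J] [DecidableEq J] {m : ℕ} (hm : 0 < m) (p : J → ℕ) :
    ∃ σ : J → ℕ,
      (∀ t : ℕ, (univ.filter fun k : J => σ k ≤ t ∧ t < σ k + p k).card ≤ m) ∧
      (∀ k : J, m * σ k ≤ ∑ j ∈ univ.erase k, p j) := by
  classical
  set n := Fintype.card J with hn
  set e : J ≃ Fin n := Fintype.equivFin J with he
  set q : ℕ → ℕ := fun a => if h : a < n then p (e.symm ⟨a, h⟩) else 0 with hq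
  have hqe : ∀ j : J, q ((e j : Fin n) : ℕ) = p j := by
    intro j
    simp only [hq, (e j).isLt, dif_pos, Fin.eta, Equiv.symm_apply_apply]
  set σn : ℕ → ℕ := fun k => loads hm q k (minIdx hm (loads hm q k)) with hσn
  set μ : ℕ → Fin m := fun k => minIdx hm (loads hm q k) with hμ
  -- disjointness on same machine
  have disj : ∀ a b : ℕ, a < b → μ a = μ b → σn a + q a ≤ σn b := by
    intro a b hab hμab
    have h1 : σn a + q a = loads hm q (a+1) (μ a) := (loads_succ_min hm q a).symm
    have h2 : loads hm q (a+1) (μ a) ≤ loads hm q b (μ a) := loads_mono hm q (by omega) _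
    rw [h1, hμab] at *
    exact le_trans h2 (le_of_eq rfl)
  refine ⟨fun j => σn (e j), ?_, ?_⟩
  · intro t
    have key := Finset.card_le_card_of_injOn (fun j : J => μ (e j))
      (fun j _ => Finset.mem_univ _) (s := univ.filter fun k : J => σn (e k) ≤ t ∧ t < σn (e k) + p k)
      ?_
    · refine le_trans (le_trans (le_of_eq ?_) key) ?_
      · rfl
      · show (univ : Finset (Fin m)).card ≤ m
        rw [Finset.card_univ, Fintype.card_fin]
    · intro j hj j' hj' hμe
      by_contra hne
      simp only [Finset.coe_filter, Set.mem_setOf_eq, mem_univ, true_and] at hj hj'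
      have hne' : e j ≠ e j' := fun h => hne (e.injective h)
      rcases lt_trichotomy ((e j : Fin n) : ℕ) ((e j' : Fin n) : ℕ) with h | h | h
      · have := disj _ _ h hμe
        rw [hqe j] at this
        omega
      · exact hne' (Fin.ext h)
      · have := disj _ _ h hμe.symm
        rw [hqe j'] at this
        omega
  · intro k
    show m * σn (e k) ≤ ∑ j ∈ univ.erase k, p j
    have h1 : m * σn (e k) ≤ ∑ i, loads hm q (e k : Fin n).val i := by
      have := Finset.card_nsmul_le_sum Finset.univ (loads hm q (e k : Fin n).val)
        (σn (e k)) (fun i _ => minIdx_le hm _ i)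
      simpa [Finset.card_univ, smul_eq_mul] using this
    have h2 : ∑ a ∈ Finset.range (e k : Fin n).val, q a
        ≤ ∑ a ∈ (Finset.range n).erase ((e k : Fin n) : ℕ), q a := by
      apply Finset.sum_le_sum_of_subset
      intro a ha
      simp only [Finset.mem_range] at ha
      simp only [Finset.mem_erase, Finset.mem_range]
      have := (e k).isLt
      omega
    have h3 : ∑ a ∈ (Finset.range n).erase ((e k : Fin n) : ℕ), q a + q ((e k : Fin n) : ℕ)
        = ∑ a ∈ Finset.range n, q a :=
      Finset.sum_erase_add _ _ (Finset.mem_range.2 (e k).isLt)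
    have h4 : ∑ a ∈ Finset.range n, q a = ∑ j, p j := by
      rw [← Fin.sum_univ_eq_sum_range]
      rw [show (fun i : Fin n => q i) = fun i : Fin n => p (e.symm i) by
        funext i; simp only [hq, i.isLt, dif_pos, Fin.eta]]
      exact Equiv.sum_comp e.symm p
    have h5 : ∑ j ∈ univ.erase k, p j + p k = ∑ j, p j :=
      Finset.sum_erase_add _ _ (Finset.mem_univ k)
    have h6 := hqe k
    have h7 := loads_sum hm q (e k : Fin n).val
    omega

lemma part_bound {m : ℕ} (hm : 1 ≤ m) {x S P M : ℚ}
    (hPM : P ≤ M) (h : (m : ℚ) * x + P ≤ S) : x + P ≤ S / m - M / m + M := by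
  have hm' : (0 : ℚ) < m := by exact_mod_cast hm
  have hm1 : (1 : ℚ) ≤ m := by exact_mod_cast hm
  have key : (x + P) * m ≤ S - M + m * M := by nlinarith [mul_nonneg (by linarith : (0:ℚ) ≤ (m:ℚ) - 1) (by linarith : (0:ℚ) ≤ M - P)]
  have : x + P ≤ (S - M + m * M) / m := (le_div_iff₀ hm').2 key
  have heq : (S - M + m * M) / m = S / m - M / m + M := by
    field_simp
  linarith [heq ▸ this]

theorem parallel_dock_initial_upper_bound
    {J1 J2 : Type*} [Fintype J1] [Fintype J2] [Nonempty J1] [Nonempty J2]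
    (p1 : J1 → ℕ) (p2 : J2 → ℕ)
    (hp1 : ∀ i, 1 ≤ p1 i) (hp2 : ∀ j, 1 ≤ p2 j)
    (pred : J2 → Finset J1) (hpred : ∀ j, (pred j).Nonempty)
    (m1 m2 : ℕ) (hm1 : 1 ≤ m1) (hm2 : 1 ≤ m2) :
    ∃ (σ1 : J1 → ℕ) (σ2 : J2 → ℕ),
      ((∀ t : ℕ, (univ.filter fun i : J1 => σ1 i ≤ t ∧ t < σ1 i + p1 i).card ≤ m1) ∧
       (∀ t : ℕ, (univ.filter fun j : J2 => σ2 j ≤ t ∧ t < σ2 j + p2 j).card ≤ m2) ∧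
       (∀ j : J2, ∀ i ∈ pred j, σ1 i + p1 i ≤ σ2 j)) ∧
      ((univ.sup' univ_nonempty (fun j : J2 => σ2 j + p2 j) : ℕ) : ℚ)
        ≤ (∑ i, (p1 i : ℚ)) / (m1 : ℚ)
          - ((univ.sup' univ_nonempty (fun i => p1 i) : ℕ) : ℚ) / (m1 : ℚ)
          + ((univ.sup' univ_nonempty (fun i => p1 i) : ℕ) : ℚ)
          + (∑ j, (p2 j : ℚ)) / (m2 : ℚ)
          - ((univ.sup' univ_nonempty (fun j => p2 j) : ℕ) : ℚ) / (m2 : ℚ)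
          + ((univ.sup' univ_nonempty (fun j => p2 j) : ℕ) : ℚ) := by
  classical
  obtain ⟨σ1, hfeas1, hbound1⟩ := greedy_schedule (J := J1) hm1 p1
  obtain ⟨τ, hfeas2, hbound2⟩ := greedy_schedule (J := J2) hm2 p2
  set T1 : ℕ := univ.sup' univ_nonempty (fun i : J1 => σ1 i + p1 i) with hT1
  refine ⟨σ1, fun j => T1 + τ j, ⟨hfeas1, ?_, ?_⟩, ?_⟩
  · intro t
    by_cases ht : T1 ≤ t
    · refine le_trans (Finset.card_le_card ?_) (hfeas2 (t - T1))
      intro j hj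
      simp only [mem_filter, mem_univ, true_and] at hj ⊢
      omega
    · have hempty : (univ.filter fun j : J2 => (fun j => T1 + τ j) j ≤ t ∧ t < (fun j => T1 + τ j) j + p2 j) = ∅ := by
        rw [Finset.filter_eq_empty_iff]
        intro j _
        simp only
        omega
      rw [hempty]
      simp
  · intro j i hi
    have h := Finset.le_sup' (fun i : J1 => σ1 i + p1 i) (Finset.mem_univ i)
    simp only
    omega
  · obtain ⟨j0, -, hj0⟩ := Finset.exists_mem_eq_sup' (univ_nonempty)
      (fun j : J2 => (fun j => T1 + τ j) j + p2 j)
    rw [hj0]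
    obtain ⟨i0, -, hi0⟩ := Finset.exists_mem_eq_sup' (univ_nonempty)
      (fun i : J1 => σ1 i + p1 i)
    -- stage 1 bound
    have e1 : ∑ i ∈ univ.erase i0, p1 i + p1 i0 = ∑ i, p1 i :=
      Finset.sum_erase_add _ _ (Finset.mem_univ i0)
    have b1n : m1 * σ1 i0 + p1 i0 ≤ ∑ i, p1 i := by
      have := hbound1 i0
      have hp := hp1 i0
      omega
    have b1 : (σ1 i0 : ℚ) + (p1 i0 : ℚ)
        ≤ (∑ i, (p1 i : ℚ)) / m1 - ((univ.sup' univ_nonempty (fun i => p1 i) : ℕ) : ℚ) / m1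
          + ((univ.sup' univ_nonempty (fun i => p1 i) : ℕ) : ℚ) := by
      apply part_bound hm1
      · exact_mod_cast Finset.le_sup' (fun i : J1 => p1 i) (Finset.mem_univ i0)
      · exact_mod_cast b1n
    have b2n : m2 * τ j0 + p2 j0 ≤ ∑ j, p2 j := by
      have := hbound2 j0
      have e2 : ∑ j ∈ univ.erase j0, p2 j + p2 j0 = ∑ j, p2 j :=
        Finset.sum_erase_add _ _ (Finset.mem_univ j0)
      omega
    have b2 : (τ j0 : ℚ) + (p2 j0 : ℚ)
        ≤ (∑ j, (p2 j : ℚ)) / m2 - ((univ.sup' univ_nonempty (fun j => p2 j) : ℕ) : ℚ) / m2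
          + ((univ.sup' univ_nonempty (fun j => p2 j) : ℕ) : ℚ) := by
      apply part_bound hm2
      · exact_mod_cast Finset.le_sup' (fun j : J2 => p2 j) (Finset.mem_univ j0)
      · exact_mod_cast b2n
    have hT1c : (T1 : ℚ) = (σ1 i0 : ℚ) + (p1 i0 : ℚ) := by
      rw [hT1, hi0]; push_cast; ring
    have hL : (((fun j => T1 + τ j) j0 + p2 j0 : ℕ) : ℚ)
        = ((σ1 i0 : ℚ) + (p1 i0 : ℚ)) + ((τ j0 : ℚ) + (p2 j0 : ℚ)) := by
      show ((T1 + τ j0 + p2 j0 : ℕ) : ℚ) = _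
      rw [Nat.cast_add, Nat.cast_add, hT1c]; ring
    rw [hL]
    linarith [b1, b2]
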